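/- Let G be a life-time distribution function on [0,∞) with G(0) = 0 and lim_{t→∞} G(t) = 1, let μ > 1 and β > 0 satisfy μ·∫₀^∞ e^{−βt} dG(t) = 1, and set n₁ = (μ − 1)/(β μ² ∫₀^∞ t e^{−βt} dG(t)). For y ≥ 0 with G(y) < 1 let G_y(t) = (G(y+t) − G(y))/(1 − G(y)) and V(y) = ∫₀^∞ e^{−βu} dG_y(u). Let M : [0,∞) → [0,∞) be measurable and locally bounded with ∫₀^∞ |e^{−βt} M_t − n₁| dt < ∞, and define M_t[y] = (1 − G_y(t)) + μ·∫₀^t M_{t−u} dG_y(u). Then ∫₀^∞ |e^{−βt} M_t[y] − n₁·μ·V(y)| dt < ∞. -/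

import Mathlib

open MeasureTheory Set

theorem stmt_19
    -- life-time distribution: ν is the measure of G, G t = ν (Iic t)
    (ν : Measure ℝ) [IsProbabilityMeasure ν] (hν0 : ν (Iic 0) = 0)
    (μ β : ℝ) (hμ : 1 < μ) (hβpos : 0 < β)
    (hmalthus : μ * ∫ t, Real.exp (-β * t) ∂ν = 1)
    (n₁ : ℝ) (hn₁ : n₁ = (μ - 1) / (β * μ ^ 2 * ∫ t, t * Real.exp (-β * t) ∂ν))
    -- the age y and its residual life-time distribution (the measure of G_y)
    (y : ℝ) (hy : 0 ≤ y) (hGy : (ν (Iic y)).toReal < 1)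
    (residy : Measure ℝ)
    (hresidy : residy =
      (ENNReal.ofReal (1 - (ν (Iic y)).toReal))⁻¹ •
        Measure.map (fun v => v - y) (ν.restrict (Ioi y)))
    (V : ℝ) (hV : V = ∫ u, Real.exp (-β * u) ∂residy)
    -- the expected population size M_t from a newborn particle
    (M : ℝ → ℝ) (hMmeas : Measurable M)
    (hMlocbdd : ∀ r : ℝ, ∃ C : ℝ, ∀ t ∈ Icc (0:ℝ) r, |M t| ≤ C)
    (hMint : IntegrableOn (fun t => Real.exp (-β * t) * M t - n₁) (Ioi (0:ℝ)))
    -- the expected population size M_t[y] from a particle aged y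
    (My : ℝ → ℝ)
    (hMy : ∀ t ≥ (0:ℝ), My t =
      (1 - (residy (Iic t)).toReal) + μ * ∫ u in Icc (0:ℝ) t, M (t - u) ∂residy) :
    IntegrableOn (fun t => Real.exp (-β * t) * My t - n₁ * μ * V) (Ioi (0:ℝ)) := by
  classical
  set g : ℝ → ℝ := fun s => Real.exp (-β * s) * M s - n₁ with hg_def
  have hgmeas : Measurable g :=
    ((Real.measurable_exp.comp (measurable_const.mul measurable_id)).mul hMmeas).sub
      measurable_const
  -- facts about ν and residy
  have hνIic_ne : ν (Iic y) ≠ ⊤ := measure_ne_top ν _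
  have hνIic_lt1 : ν (Iic y) < 1 := by
    rw [← ENNReal.ofReal_toReal hνIic_ne]
    exact ENNReal.ofReal_lt_one.mpr hGy
  have hIoi_eq : ν (Ioi y) = 1 - ν (Iic y) := by
    have h := measure_compl (measurableSet_Iic (a := y)) hνIic_ne
    simpa [compl_Iic] using h
  have hIoi_pos : 0 < ν (Ioi y) := by
    rw [hIoi_eq]
    exact tsub_pos_of_lt hνIic_lt1
  have hIoi_ne : ν (Ioi y) ≠ ⊤ := measure_ne_top ν _
  have hofReal : ENNReal.ofReal (1 - (ν (Iic y)).toReal) = ν (Ioi y) := by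
    rw [ENNReal.ofReal_sub _ ENNReal.toReal_nonneg, ENNReal.ofReal_one,
      ENNReal.ofReal_toReal hνIic_ne, hIoi_eq]
  have hres_apply : ∀ s : Set ℝ, MeasurableSet s →
      residy s = (ν (Ioi y))⁻¹ * ν ((fun v => v - y) ⁻¹' s ∩ Ioi y) := by
    intro s hs
    rw [hresidy, hofReal, Measure.smul_apply, Measure.map_apply (measurable_sub_const y) hs,
      Measure.restrict_apply ((measurable_sub_const y) hs), smul_eq_mul]
  have hprob : IsProbabilityMeasure residy := by
    constructor
    rw [hres_apply univ MeasurableSet.univ]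
    simp [ENNReal.inv_mul_cancel hIoi_pos.ne' hIoi_ne]
  haveI := hprob
  have hres0 : residy (Iic 0) = 0 := by
    rw [hres_apply _ measurableSet_Iic]
    have he : (fun v => v - y) ⁻¹' Iic 0 ∩ Ioi y = ∅ := by
      ext v
      simp only [mem_inter_iff, mem_preimage, mem_Iic, mem_Ioi, mem_empty_iff_false, iff_false,
        not_and, not_lt, sub_nonpos]
      exact fun h => h
    rw [he]
    simp
  have hae_pos : ∀ᵐ u ∂residy, 0 < u := by
    rw [ae_iff]
    have hset : {u : ℝ | ¬ 0 < u} = Iic 0 := by ext u; simp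
    rw [hset]
    exact hres0
  -- the integrable kernel Φ on the product space
  have hg_int : Integrable ((Ioi (0:ℝ)).indicator g) volume :=
    (integrable_indicator_iff measurableSet_Ioi).mpr hMint
  set ψ : ℝ × ℝ → ℝ := fun p => g (p.1 - p.2) * Real.exp (-β * p.2) with hψ_def
  set S : Set (ℝ × ℝ) := {p | 0 ≤ p.2 ∧ p.2 ≤ p.1} with hS_def
  have hSmeas : MeasurableSet S :=
    (measurableSet_le measurable_const measurable_snd).inter
      (measurableSet_le measurable_snd measurable_fst)
  have hψmeas : Measurable ψ :=
    (hgmeas.comp (measurable_fst.sub measurable_snd)).mul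
      (Real.measurable_exp.comp (measurable_const.mul measurable_snd))
  set Φ : ℝ × ℝ → ℝ := S.indicator ψ with hΦ_def
  have hΦmeas : Measurable Φ := hψmeas.indicator hSmeas
  -- for each u > 0, Φ (·, u) agrees a.e. on Ioi 0 with a translate of the indicator of g
  have hΦeq : ∀ u : ℝ, 0 < u →
      (fun t => Φ (t, u)) =ᵐ[volume.restrict (Ioi (0:ℝ))]
      (fun t => ((Ioi (0:ℝ)).indicator g) (t - u) * Real.exp (-β * u)) := by
    intro u hu
    have hu_ne : ∀ᵐ t ∂(volume.restrict (Ioi (0:ℝ))), t ≠ u := by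
      refine ae_restrict_of_ae ?_
      rw [ae_iff]
      have hset : {t : ℝ | ¬ t ≠ u} = {u} := by ext t; simp
      rw [hset]
      exact Real.volume_singleton
    filter_upwards [hu_ne] with t ht
    by_cases hle : u < t
    · have ht2 : t - u ∈ Ioi (0:ℝ) := by simpa [sub_pos] using hle
      have hmem : (t, u) ∈ S := ⟨hu.le, hle.le⟩
      rw [hΦ_def, indicator_of_mem hmem, indicator_of_mem ht2]
    · have hlt : t < u := lt_of_le_of_ne (not_lt.mp hle) ht
      have ht2 : t - u ∉ Ioi (0:ℝ) := by
        simp only [mem_Ioi, not_lt, sub_nonpos]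
        exact hlt.le
      have hmem : (t, u) ∉ S := fun h => absurd h.2 (not_le.mpr hlt)
      rw [hΦ_def, indicator_of_notMem hmem, indicator_of_notMem ht2, zero_mul]
  have hΦsec : ∀ u : ℝ, 0 < u →
      Integrable (fun t => Φ (t, u)) (volume.restrict (Ioi (0:ℝ))) := by
    intro u hu
    have h1 : Integrable (fun t => ((Ioi (0:ℝ)).indicator g) (t - u) * Real.exp (-β * u))
        (volume.restrict (Ioi (0:ℝ))) := ((hg_int.comp_sub_right u).mul_const _).restrict
    exact h1.congr (hΦeq u hu).symm
  set K : ℝ := ∫ t, ‖(Ioi (0:ℝ)).indicator g t‖ with hK_def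
  have hΦint : Integrable Φ ((volume.restrict (Ioi (0:ℝ))).prod residy) := by
    rw [integrable_prod_iff' hΦmeas.aestronglyMeasurable]
    constructor
    · filter_upwards [hae_pos] with u hu
      exact hΦsec u hu
    · refine Integrable.mono' (integrable_const K) ?_ ?_
      · exact (hΦmeas.norm.stronglyMeasurable.integral_prod_left').aestronglyMeasurable
      · filter_upwards [hae_pos] with u hu
        have hnn : 0 ≤ ∫ t in Ioi (0:ℝ), ‖Φ (t, u)‖ :=
          integral_nonneg fun t => norm_nonneg _
        rw [Real.norm_of_nonneg hnn]
        have heqnorm : (fun t => ‖Φ (t, u)‖) =ᵐ[volume.restrict (Ioi (0:ℝ))]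
            (fun t => ‖((Ioi (0:ℝ)).indicator g) (t - u)‖ * Real.exp (-β * u)) := by
          filter_upwards [hΦeq u hu] with t ht
          rw [ht, norm_mul, Real.norm_of_nonneg (Real.exp_pos _).le]
        rw [integral_congr_ae heqnorm, integral_mul_const]
        have hK1 : ∫ t in Ioi (0:ℝ), ‖((Ioi (0:ℝ)).indicator g) (t - u)‖ ≤ K := by
          have hint : Integrable (fun t => ‖((Ioi (0:ℝ)).indicator g) (t - u)‖) volume :=
            (hg_int.comp_sub_right u).norm
          refine le_trans (setIntegral_le_integral hint
            (Filter.Eventually.of_forall fun t => norm_nonneg _)) ?_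
          rw [hK_def]
          exact le_of_eq (integral_sub_right_eq_self (fun t => ‖(Ioi (0:ℝ)).indicator g t‖) u)
        have hexp1 : Real.exp (-β * u) ≤ 1 := by
          rw [Real.exp_le_one_iff]
          nlinarith
        calc (∫ t in Ioi (0:ℝ), ‖((Ioi (0:ℝ)).indicator g) (t - u)‖) * Real.exp (-β * u)
            ≤ K * 1 := by
              refine mul_le_mul hK1 hexp1 (Real.exp_pos _).le ?_
              rw [hK_def]
              exact integral_nonneg fun t => norm_nonneg _
          _ = K := mul_one K
  have hB : Integrable (fun t => ∫ u, Φ (t, u) ∂residy) (volume.restrict (Ioi (0:ℝ))) :=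
    hΦint.integral_prod_left
  -- the function h3
  have hexp_res_int : Integrable (fun u => Real.exp (-β * u)) residy := by
    refine Integrable.mono' (integrable_const 1) ?_ ?_
    · exact (Real.measurable_exp.comp (measurable_const.mul measurable_id)).aestronglyMeasurable
    · filter_upwards [hae_pos] with u hu
      rw [Real.norm_of_nonneg (Real.exp_pos _).le, Real.exp_le_one_iff]
      nlinarith
  set h3 : ℝ → ℝ := fun t => ∫ u in Icc (0:ℝ) t, Real.exp (-β * u) ∂residy with hh3_def
  have hh3mono : Monotone h3 := by
    intro s t hst
    refine setIntegral_mono_set hexp_res_int.integrableOn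
      (Filter.Eventually.of_forall fun u => (Real.exp_pos _).le) ?_
    exact HasSubset.Subset.eventuallyLE (Icc_subset_Icc le_rfl hst)
  have hh3V : ∀ t : ℝ, 0 < t → |h3 t - V| ≤ Real.exp (-β * t) := by
    intro t ht
    have hsplit : h3 t + ∫ u in (Icc (0:ℝ) t)ᶜ, Real.exp (-β * u) ∂residy = V := by
      rw [hV, hh3_def]
      exact integral_add_compl measurableSet_Icc hexp_res_int
    have hnn : 0 ≤ ∫ u in (Icc (0:ℝ) t)ᶜ, Real.exp (-β * u) ∂residy :=
      integral_nonneg fun u => (Real.exp_pos _).le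
    have hub : ∫ u in (Icc (0:ℝ) t)ᶜ, Real.exp (-β * u) ∂residy ≤ Real.exp (-β * t) := by
      have hle : ∫ u in (Icc (0:ℝ) t)ᶜ, Real.exp (-β * u) ∂residy ≤
          ∫ _u in (Icc (0:ℝ) t)ᶜ, Real.exp (-β * t) ∂residy := by
        refine integral_mono_ae hexp_res_int.integrableOn (integrable_const _) ?_
        filter_upwards [ae_restrict_of_ae hae_pos,
          ae_restrict_mem measurableSet_Icc.compl] with u hu hmem
        have htu : t < u := by
          by_contra h
          exact hmem ⟨hu.le, not_lt.mp h⟩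
        exact Real.exp_le_exp.mpr (by nlinarith)
      refine hle.trans ?_
      rw [setIntegral_const, smul_eq_mul]
      have hm : (residy (Icc (0:ℝ) t)ᶜ).toReal ≤ 1 := by
        have := prob_le_one (μ := residy) (s := (Icc (0:ℝ) t)ᶜ)
        calc (residy (Icc (0:ℝ) t)ᶜ).toReal ≤ (1 : ENNReal).toReal :=
              ENNReal.toReal_mono ENNReal.one_ne_top this
          _ = 1 := ENNReal.toReal_one
      unfold Measure.real
      nlinarith [Real.exp_pos (-β * t)]
    have : h3 t - V = -(∫ u in (Icc (0:ℝ) t)ᶜ, Real.exp (-β * u) ∂residy) := by linarith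
    rw [this, abs_neg, abs_of_nonneg hnn]
    exact hub
  have hh3meas : Measurable h3 := hh3mono.measurable
  -- integrability of the three pieces
  have hexpint : IntegrableOn (fun t => Real.exp (-β * t)) (Ioi (0:ℝ)) :=
    exp_neg_integrableOn_Ioi 0 hβpos
  have hCint : IntegrableOn (fun t => μ * n₁ * (h3 t - V)) (Ioi (0:ℝ)) := by
    refine Integrable.mono' ((hexpint.const_mul (|μ * n₁|))) ?_ ?_
    · exact ((measurable_const.mul ((hh3meas.sub measurable_const)))).aestronglyMeasurable
    · filter_upwards [ae_restrict_mem measurableSet_Ioi] with t ht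
      calc ‖μ * n₁ * (h3 t - V)‖ = |μ * n₁| * |h3 t - V| := by
            rw [Real.norm_eq_abs, abs_mul]
        _ ≤ |μ * n₁| * Real.exp (-β * t) :=
            mul_le_mul_of_nonneg_left (hh3V t ht) (abs_nonneg _)
  have hF01 : ∀ t : ℝ, 0 ≤ (residy (Iic t)).toReal ∧ (residy (Iic t)).toReal ≤ 1 := by
    intro t
    refine ⟨ENNReal.toReal_nonneg, ?_⟩
    calc (residy (Iic t)).toReal ≤ (1 : ENNReal).toReal :=
        ENNReal.toReal_mono ENNReal.one_ne_top (prob_le_one)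
      _ = 1 := ENNReal.toReal_one
  have hFmono : Monotone (fun t => (residy (Iic t)).toReal) := by
    intro s t hst
    exact ENNReal.toReal_mono (measure_ne_top _ _) (measure_mono (Iic_subset_Iic.mpr hst))
  have hAint : IntegrableOn (fun t => Real.exp (-β * t) * (1 - (residy (Iic t)).toReal))
      (Ioi (0:ℝ)) := by
    refine Integrable.mono' hexpint ?_ ?_
    · exact ((Real.measurable_exp.comp (measurable_const.mul measurable_id)).mul
        (measurable_const.sub hFmono.measurable)).aestronglyMeasurable
    · refine Filter.Eventually.of_forall fun t => ?_
      rw [Real.norm_eq_abs, abs_mul, abs_of_nonneg (Real.exp_pos _).le]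
      have h1 : |1 - (residy (Iic t)).toReal| ≤ 1 := by
        rcases hF01 t with ⟨h0, h2⟩
        rw [abs_of_nonneg (by linarith)]
        linarith
      nlinarith [Real.exp_pos (-β * t)]
  -- combine
  have htotal : IntegrableOn (fun t =>
      Real.exp (-β * t) * (1 - (residy (Iic t)).toReal) + μ * (∫ u, Φ (t, u) ∂residy)
        + μ * n₁ * (h3 t - V)) (Ioi (0:ℝ)) :=
    (hAint.add (hB.const_mul μ)).add hCint
  refine htotal.congr_fun (fun t ht => ?_) measurableSet_Ioi
  -- pointwise identity for t > 0
  have ht0 : (0:ℝ) < t := ht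
  -- integrability of the two pieces on Icc 0 t w.r.t. residy
  obtain ⟨C, hC⟩ := hMlocbdd t
  have hint1 : IntegrableOn (fun u => g (t - u) * Real.exp (-β * u)) (Icc (0:ℝ) t) residy := by
    refine Integrable.mono' (integrable_const (C + |n₁|)) ?_ ?_
    · exact ((hgmeas.comp (measurable_const.sub measurable_id)).mul
        (Real.measurable_exp.comp (measurable_const.mul measurable_id))).aestronglyMeasurable
    · filter_upwards [ae_restrict_mem measurableSet_Icc] with u hu
      have hu0 : 0 ≤ u := hu.1
      have hut : u ≤ t := hu.2
      have htu : t - u ∈ Icc (0:ℝ) t := ⟨by linarith, by linarith⟩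
      have hMb := hC (t - u) htu
      have he1 : Real.exp (-β * (t - u)) ≤ 1 := by
        rw [Real.exp_le_one_iff]; nlinarith
      have he2 : Real.exp (-β * u) ≤ 1 := by
        rw [Real.exp_le_one_iff]; nlinarith
      have habsM : 0 ≤ |M (t - u)| := abs_nonneg _
      rw [Real.norm_eq_abs, abs_mul, abs_of_nonneg (Real.exp_pos _).le]
      have hg1 : |g (t - u)| ≤ C + |n₁| := by
        rw [hg_def]
        calc |Real.exp (-β * (t - u)) * M (t - u) - n₁|
            ≤ |Real.exp (-β * (t - u)) * M (t - u)| + |n₁| := abs_sub _ _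
          _ ≤ C + |n₁| := by
              have : |Real.exp (-β * (t - u)) * M (t - u)| ≤ C := by
                rw [abs_mul, abs_of_nonneg (Real.exp_pos _).le]
                nlinarith [Real.exp_pos (-β * (t - u))]
              linarith
      have hCnn : 0 ≤ C + |n₁| := le_trans (abs_nonneg _) hg1
      nlinarith [abs_nonneg (g (t - u)), Real.exp_pos (-β * u)]
  have hint2 : IntegrableOn (fun u => Real.exp (-β * u)) (Icc (0:ℝ) t) residy :=
    hexp_res_int.integrableOn
  -- the section integral of Φ equals the set integral over Icc 0 t
  have hΦsec_eq : ∫ u, Φ (t, u) ∂residy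
      = ∫ u in Icc (0:ℝ) t, g (t - u) * Real.exp (-β * u) ∂residy := by
    have hfun : (fun u => Φ (t, u))
        = (Icc (0:ℝ) t).indicator (fun u => g (t - u) * Real.exp (-β * u)) := by
      funext u
      by_cases hu : u ∈ Icc (0:ℝ) t
      · have hmem : (t, u) ∈ S := ⟨hu.1, hu.2⟩
        rw [hΦ_def, indicator_of_mem hmem, indicator_of_mem hu]
      · have hmem : (t, u) ∉ S := fun h => hu ⟨h.1, h.2⟩
        rw [hΦ_def, indicator_of_notMem hmem, indicator_of_notMem hu]
    rw [hfun, integral_indicator measurableSet_Icc]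
  -- main computation
  rw [hMy t ht0.le]
  have hmulin : Real.exp (-β * t) * (μ * ∫ u in Icc (0:ℝ) t, M (t - u) ∂residy)
      = μ * ∫ u in Icc (0:ℝ) t, Real.exp (-β * t) * M (t - u) ∂residy := by
    rw [integral_const_mul (Real.exp (-β * t)) (fun u => M (t - u))]
    ring
  have hintegrand : ∀ u : ℝ, Real.exp (-β * t) * M (t - u)
      = g (t - u) * Real.exp (-β * u) + n₁ * Real.exp (-β * u) := by
    intro u
    have key : Real.exp (-β * (t - u)) * Real.exp (-β * u) = Real.exp (-β * t) := by
      rw [← Real.exp_add]; ring_nf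
    simp only [hg_def]
    linear_combination (-(M (t - u))) * key
  have hsplit : ∫ u in Icc (0:ℝ) t, Real.exp (-β * t) * M (t - u) ∂residy
      = (∫ u in Icc (0:ℝ) t, g (t - u) * Real.exp (-β * u) ∂residy) + n₁ * h3 t := by
    have : (fun u => Real.exp (-β * t) * M (t - u))
        = (fun u => g (t - u) * Real.exp (-β * u) + n₁ * Real.exp (-β * u)) := by
      funext u; exact hintegrand u
    rw [this, integral_add hint1 (hint2.const_mul n₁), hh3_def,
      integral_const_mul n₁ (fun u => Real.exp (-β * u))]
  beta_reduce
  rw [mul_add, hmulin, hsplit, hΦsec_eq]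
  ring
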